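/- Let X_1, …, X_N be real samples. For every x ∈ ℝ, lim_{h→0⁺} ∫_{−∞}^x f̂_h(t) dt = (#{n : X_n < x} + (1/2)·#{n : X_n = x}) / N; in particular, at a sample point the limiting value of the Gaussian KDE c.d.f. counts that point with weight one half. -/

import Mathlib

open MeasureTheory Filter

/-- The Gaussian kernel `K(z) = exp(-z²/2)/√(2π)`. -/
noncomputable def gaussKernel (z : ℝ) : ℝ := Real.exp (-z ^ 2 / 2) / Real.sqrt (2 * Real.pi)

/-- The Gaussian kernel density estimator with bandwidth `h` for samples `X`. -/
noncomputable def kde (N : ℕ) (X : Fin N → ℝ) (h x : ℝ) : ℝ :=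
  (1 / (N * h)) * ∑ n, gaussKernel ((x - X n) / h)

/-- `P_h(a,b) = ∫_a^b f̂_h(t) dt`. -/
noncomputable def kdeMass (N : ℕ) (X : Fin N → ℝ) (h a b : ℝ) : ℝ :=
  ∫ t in a..b, kde N X h t

/-- The kernel density integral transform, where `a` is the sample minimum and `b`
the sample maximum. -/
noncomputable def kdi (N : ℕ) (X : Fin N → ℝ) (a b h x : ℝ) : ℝ :=
  if x < a then 0
  else if x < b then kdeMass N X h a x / kdeMass N X h a b
  else 1

/-- Min-max scaling, where `a` is the sample minimum and `b` the sample maximum. -/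
noncomputable def minmax (a b x : ℝ) : ℝ :=
  if x ≤ a then 0
  else if x ≤ b then (x - a) / (b - a)
  else 1

open Set in
lemma gaussKernel_nonneg (z : ℝ) : 0 ≤ gaussKernel z :=
  div_nonneg (Real.exp_nonneg _) (Real.sqrt_nonneg _)

lemma gaussKernel_eq (z : ℝ) :
    gaussKernel z = Real.exp (-(1/2) * z ^ 2) * (Real.sqrt (2 * Real.pi))⁻¹ := by
  rw [gaussKernel, div_eq_mul_inv]; ring_nf

lemma integrable_gaussKernel : Integrable gaussKernel := by
  have h := integrable_exp_neg_mul_sq (show (0:ℝ) < 1/2 by norm_num)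
  simpa only [← gaussKernel_eq] using h.mul_const (Real.sqrt (2 * Real.pi))⁻¹

lemma integral_gaussKernel : ∫ z, gaussKernel z = 1 := by
  have h := integral_gaussian (1/2 : ℝ)
  have h2 : Real.sqrt (Real.pi / (1/2)) = Real.sqrt (2 * Real.pi) := by norm_num; ring_nf
  have hpos : (0:ℝ) < Real.sqrt (2 * Real.pi) :=
    Real.sqrt_pos.2 (by positivity)
  simp only [gaussKernel_eq]
  rw [MeasureTheory.integral_mul_const, h, h2, mul_inv_cancel₀ hpos.ne']

/-- The standard Gaussian c.d.f. -/
noncomputable def gaussCDF (y : ℝ) : ℝ := ∫ t in Set.Iic y, gaussKernel t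

open Set in
lemma gaussCDF_add_Ioi (y : ℝ) :
    gaussCDF y + ∫ t in Ioi y, gaussKernel t = 1 := by
  have := MeasureTheory.setIntegral_union (f := gaussKernel) (μ := volume)
    (Iic_disjoint_Ioi (le_refl y)) measurableSet_Ioi
    integrable_gaussKernel.integrableOn integrable_gaussKernel.integrableOn
  rw [Iic_union_Ioi] at this
  rw [gaussCDF, ← this]
  simpa using integral_gaussKernel

open Set in
lemma tendsto_gaussCDF_atTop : Tendsto gaussCDF atTop (nhds 1) := by
  have := (MeasureTheory.aecover_Iic (μ := volume) (l := atTop) (tendsto_id (α := ℝ)))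
    |>.integral_tendsto_of_countably_generated integrable_gaussKernel
  rwa [integral_gaussKernel] at this

open Set in
lemma tendsto_gaussCDF_atBot : Tendsto gaussCDF atBot (nhds 0) := by
  have h := (MeasureTheory.aecover_Ioi (μ := volume) (l := atBot) (tendsto_id (α := ℝ)))
    |>.integral_tendsto_of_countably_generated integrable_gaussKernel
  rw [integral_gaussKernel] at h
  have : gaussCDF = fun y => 1 - ∫ t in Ioi y, gaussKernel t := by
    funext y; have := gaussCDF_add_Ioi y; linarith
  rw [this]
  simpa using (tendsto_const_nhds (x := (1:ℝ))).sub h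

open Set in
lemma gaussCDF_zero : gaussCDF 0 = 1 / 2 := by
  have heq : ∫ t in Ioi (0:ℝ), gaussKernel t = gaussCDF 0 := by
    have h0 := integral_comp_neg_Iic (0:ℝ) gaussKernel
    rw [neg_zero] at h0
    rw [← h0, gaussCDF]
    refine MeasureTheory.integral_congr_ae (Filter.Eventually.of_forall fun t => ?_)
    simp [gaussKernel, neg_sq]
  have := gaussCDF_add_Ioi 0
  rw [heq] at this
  linarith

lemma integrable_gaussKernel_comp (c : ℝ) {h : ℝ} (hh : 0 < h) :
    Integrable (fun t => gaussKernel ((t - c) / h)) :=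
  (integrable_gaussKernel.comp_div hh.ne').comp_sub_right c

open Set MeasureTheory in
lemma integral_Iic_gaussKernel_comp (c : ℝ) {h : ℝ} (hh : 0 < h) (x : ℝ) :
    ∫ t in Set.Iic x, gaussKernel ((t - c) / h) = h * gaussCDF ((x - c) / h) := by
  set F : ℝ → ℝ := (Iic x).indicator fun t => gaussKernel ((t - c) / h) with hF
  have key : ∀ u : ℝ, F (h * (u + c / h)) = (Iic ((x - c) / h)).indicator gaussKernel u := by
    intro u
    have harg : h * (u + c / h) = h * u + c := by rw [mul_add, mul_div_cancel₀ c hh.ne']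
    have hmem : h * u + c ≤ x ↔ u ≤ (x - c) / h := by
      rw [le_div_iff₀ hh]; constructor <;> intro <;> linarith
    simp only [hF, Set.indicator, mem_Iic, harg, hmem]
    congr 1
    rw [show h * u + c - c = h * u from by ring, mul_comm h u, mul_div_assoc, div_self hh.ne', mul_one]
  have h1 : ∫ t in Iic x, gaussKernel ((t - c) / h) = ∫ t, F t :=
    (integral_indicator measurableSet_Iic).symm
  have h2 : ∫ s, F (h * s) = |h⁻¹| • ∫ t, F t := Measure.integral_comp_mul_left F h
  have h3 : ∫ u, F (h * (u + c / h)) = ∫ s, F (h * s) :=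
    integral_add_right_eq_self (fun s => F (h * s)) (c / h)
  have h4 : ∫ u, F (h * (u + c / h)) = gaussCDF ((x - c) / h) := by
    simp_rw [key]
    rw [integral_indicator measurableSet_Iic]; rfl
  rw [h1]
  rw [← h3, h4] at h2
  rw [abs_of_pos (inv_pos.2 hh), smul_eq_mul] at h2
  field_simp at h2
  linarith [h2]
/-- For every `x`, the Gaussian KDE c.d.f. converges, as the bandwidth `h → 0⁺`, to
`(#{n : X_n < x} + (1/2)·#{n : X_n = x}) / N`: sample points equal to `x` are counted
with weight one half. -/
theorem kde_cdf_tendsto_half_weight (N : ℕ) (hN : 1 ≤ N) (X : Fin N → ℝ) (x : ℝ) :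
    Tendsto (fun h => ∫ t in Set.Iic x, kde N X h t)
      (nhdsWithin 0 (Set.Ioi 0))
      (nhds ((((Finset.univ.filter fun n => X n < x).card : ℝ) +
        (1 / 2) * ((Finset.univ.filter fun n => X n = x).card : ℝ)) / N)) := by
  have hN0 : (N : ℝ) ≠ 0 := by
    have : 0 < N := hN
    positivity
  set w : Fin N → ℝ := fun n => if X n < x then 1 else if X n = x then 1/2 else 0 with hw
  have key : ∀ h : ℝ, 0 < h →
      ∫ t in Set.Iic x, kde N X h t = (1/N) * ∑ n, gaussCDF ((x - X n)/h) := by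
    intro h hh
    simp only [kde]
    rw [MeasureTheory.integral_const_mul,
      MeasureTheory.integral_finset_sum _
        (fun n _ => (integrable_gaussKernel_comp (X n) hh).integrableOn)]
    have hcong : ∀ n ∈ Finset.univ, (∫ t in Set.Iic x, gaussKernel ((t - X n)/h))
        = h * gaussCDF ((x - X n)/h) :=
      fun n _ => integral_Iic_gaussKernel_comp (X n) hh x
    rw [Finset.sum_congr rfl hcong, ← Finset.mul_sum]
    field_simp
  have htend : ∀ n : Fin N, Tendsto (fun h => gaussCDF ((x - X n)/h))
      (nhdsWithin 0 (Set.Ioi 0)) (nhds (w n)) := by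
    intro n
    rcases lt_trichotomy (X n) x with hlt | heq | hgt
    · have hc : 0 < x - X n := by linarith
      have h1 : Tendsto (fun h : ℝ => (x - X n)/h) (nhdsWithin 0 (Set.Ioi 0)) atTop := by
        simp only [div_eq_mul_inv]
        exact tendsto_inv_nhdsGT_zero.const_mul_atTop hc
      have := tendsto_gaussCDF_atTop.comp h1
      simpa [hw, if_pos hlt, Function.comp_def] using this
    · have : (fun h : ℝ => gaussCDF ((x - X n)/h)) = fun _ => gaussCDF 0 := by
        funext h; rw [heq]; simp
      rw [this, gaussCDF_zero]
      have hne : ¬ X n < x := by rw [heq]; exact lt_irrefl x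
      simp only [hw, if_neg hne, if_pos heq]
      exact tendsto_const_nhds
    · have hc : x - X n < 0 := by linarith
      have h1 : Tendsto (fun h : ℝ => (x - X n)/h) (nhdsWithin 0 (Set.Ioi 0)) atBot := by
        simp only [div_eq_mul_inv]
        exact (tendsto_const_mul_atBot_of_neg hc).2 tendsto_inv_nhdsGT_zero
      have := tendsto_gaussCDF_atBot.comp h1
      have hne1 : ¬ X n < x := by linarith
      have hne2 : ¬ X n = x := by intro hc'; rw [hc'] at hgt; exact lt_irrefl _ hgt
      simpa [hw, if_neg hne1, if_neg hne2, Function.comp_def] using this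
  have hsum : Tendsto (fun h => (1/N : ℝ) * ∑ n, gaussCDF ((x - X n)/h))
      (nhdsWithin 0 (Set.Ioi 0)) (nhds ((1/N : ℝ) * ∑ n, w n)) :=
    (tendsto_finset_sum _ (fun n _ => htend n)).const_mul _
  have hval : (1/N : ℝ) * ∑ n, w n
      = (((Finset.univ.filter fun n => X n < x).card : ℝ) +
        (1 / 2) * ((Finset.univ.filter fun n => X n = x).card : ℝ)) / N := by
    have hwn : ∀ n, w n = (if X n < x then (1:ℝ) else 0)
        + (1/2) * (if X n = x then (1:ℝ) else 0) := by
      intro n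
      by_cases h1 : X n < x
      · have : ¬ X n = x := fun hc' => by rw [hc'] at h1; exact lt_irrefl _ h1
        simp [hw, h1, this]
      · by_cases h2 : X n = x <;> simp [hw, h1, h2]
    simp_rw [hwn, Finset.sum_add_distrib, ← Finset.mul_sum, Finset.sum_boole]
    ring
  rw [hval] at hsum
  refine Tendsto.congr' ?_ hsum
  filter_upwards [self_mem_nhdsWithin] with h hh
  exact (key h hh).symm
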